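/- Let Λ, r, t_a, t_p be positive integers with t_a + r ≤ Λ and Λ·t_p < (t_a + r)·t_p + r. Then the rate R = ∑_{i=1}^{r−1} [ C(Λ−t_a, i) · ∑_{j=0}^{r−i−1} (−1)^j C(Λ−t_a−i, j) C( C(Λ−t_a−i−j, r−i−j), t_p+1 ) ] / [ C( C(Λ−t_a, r), t_p ) · C(t_a+i, t_a) ] is nonnegative, and each inner alternating sum ∑_{j=0}^{r−i−1} (−1)^j C(Λ−t_a−i, j) C( C(Λ−t_a−i−j, r−i−j), t_p+1 ) is nonnegative. -/

import Mathlib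

open Finset

private lemma G_card (n k T : ℕ) (B : Finset (Fin n)) (hB : B.card ≤ k) :
    ((((univ : Finset (Fin n)).powersetCard k).powersetCard T).filter
      (fun F => ∀ A ∈ F, B ⊆ A)).card
      = ((n - B.card).choose (k - B.card)).choose T := by
  have hcard : ((n - B.card).choose (k - B.card)).choose T
      = ((((univ : Finset (Fin n)) \ B).powersetCard (k - B.card)).powersetCard T).card := by
    rw [card_powersetCard, card_powersetCard, card_sdiff_of_subset (subset_univ B), card_univ,
      Fintype.card_fin]
  rw [hcard]
  refine card_bij' (fun F _ => F.image (· \ B)) (fun F _ => F.image (· ∪ B)) ?_ ?_ ?_ ?_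
  · intro F hF
    simp only [mem_filter, mem_powersetCard] at hF
    obtain ⟨⟨hFsub, hFcard⟩, hFB⟩ := hF
    rw [mem_powersetCard]
    constructor
    · intro A' hA'
      obtain ⟨A, hA, rfl⟩ := mem_image.mp hA'
      have hAk : A.card = k := by
        have := hFsub hA
        rw [mem_powersetCard_univ] at this
        exact this
      rw [mem_powersetCard]
      refine ⟨sdiff_subset_sdiff (subset_univ A) le_rfl, ?_⟩
      rw [card_sdiff_of_subset (hFB A hA), hAk]
    · rw [card_image_of_injOn, hFcard]
      intro A hA A' hA' hEq
      have hEq' : A \ B = A' \ B := hEq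
      have h2 : A \ B ∪ B = A' \ B ∪ B := by rw [hEq']
      rwa [sdiff_union_of_subset (hFB A hA), sdiff_union_of_subset (hFB A' hA')] at h2
  · intro F' hF'
    rw [mem_powersetCard] at hF'
    obtain ⟨hFsub, hFcard⟩ := hF'
    have hdisj : ∀ A' ∈ F', Disjoint A' B := by
      intro A' hA'
      have := hFsub hA'
      rw [mem_powersetCard] at this
      exact (subset_sdiff.mp this.1).2
    have hAcard : ∀ A' ∈ F', A'.card = k - B.card := by
      intro A' hA'
      have := hFsub hA'
      rw [mem_powersetCard] at this
      exact this.2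
    simp only [mem_filter, mem_powersetCard]
    refine ⟨⟨?_, ?_⟩, ?_⟩
    · intro A hA
      obtain ⟨A', hA', rfl⟩ := mem_image.mp hA
      rw [mem_powersetCard_univ, card_union_of_disjoint (hdisj A' hA'), hAcard A' hA',
        Nat.sub_add_cancel hB]
    · rw [card_image_of_injOn, hFcard]
      intro A hA A' hA' hEq
      have hEq' : A ∪ B = A' ∪ B := hEq
      have h2 : (A ∪ B) \ B = (A' ∪ B) \ B := by rw [hEq']
      rwa [union_sdiff_right, union_sdiff_right,
        sdiff_eq_self_of_disjoint (hdisj A hA), sdiff_eq_self_of_disjoint (hdisj A' hA')] at h2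
    · intro A hA
      obtain ⟨A', _, rfl⟩ := mem_image.mp hA
      exact subset_union_right
  · intro F hF
    simp only [mem_filter, mem_powersetCard] at hF
    obtain ⟨⟨hFsub, hFcard⟩, hFB⟩ := hF
    show (F.image (· \ B)).image (· ∪ B) = F
    rw [image_image]
    calc F.image ((· ∪ B) ∘ (· \ B)) = F.image id := by
          apply image_congr
          intro A hA
          simp only [Function.comp_apply, id_eq]
          exact sdiff_union_of_subset (hFB A hA)
      _ = F := image_id
  · intro F' hF'
    rw [mem_powersetCard] at hF'
    obtain ⟨hFsub, hFcard⟩ := hF'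
    show (F'.image (· ∪ B)).image (· \ B) = F'
    rw [image_image]
    calc F'.image ((· \ B) ∘ (· ∪ B)) = F'.image id := by
          apply image_congr
          intro A' hA'
          simp only [Function.comp_apply, id_eq]
          have := hFsub hA'
          rw [mem_powersetCard] at this
          rw [union_sdiff_right, sdiff_eq_self_of_disjoint (subset_sdiff.mp this.1).2]
      _ = F' := image_id

private lemma alt_sum_eq (n k T : ℕ) (hT : 2 ≤ T) :
    ∑ j ∈ range (n + 1), (-1 : ℤ) ^ j * (n.choose j : ℤ) *
        (((n - j).choose (k - j)).choose T : ℤ)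
      = ((((univ : Finset (Fin n)).powersetCard k).powersetCard T).filter
          (fun F => F.inf id = ∅)).card := by
  classical
  set 𝒰 := ((univ : Finset (Fin n)).powersetCard k).powersetCard T with h𝒰
  have hGcount : ∀ C : Finset (Fin n),
      (𝒰.filter (fun F => ∀ A ∈ F, C ⊆ A)).card
        = ∑ D ∈ (univ : Finset (Fin n)).powerset,
            if C ⊆ D then (𝒰.filter (fun F => F.inf id = D)).card else 0 := by
    intro C
    have hfib := card_eq_sum_card_fiberwise
      (f := fun F : Finset (Finset (Fin n)) => F.inf id)
      (s := 𝒰.filter (fun F => ∀ A ∈ F, C ⊆ A))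
      (t := (univ : Finset (Fin n)).powerset)
      (fun F _ => mem_powerset.mpr (subset_univ _))
    rw [hfib]
    apply sum_congr rfl
    intro D _
    rw [filter_filter]
    by_cases hCD : C ⊆ D
    · rw [if_pos hCD]
      congr 1
      apply filter_congr
      intro F _
      constructor
      · exact fun h => h.2
      · intro h
        refine ⟨fun A hA => ?_, h⟩
        exact hCD.trans (h ▸ (Finset.inf_le hA : F.inf id ⊆ id A))
    · rw [if_neg hCD]
      rw [filter_false_of_mem, card_empty]
      rintro F _ ⟨hall, hinf⟩
      exact hCD (le_trans (Finset.le_inf fun A hA => hall A hA) (le_of_eq hinf))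
  have hL : ∑ j ∈ range (n + 1), (-1 : ℤ) ^ j * (n.choose j : ℤ) *
        (((n - j).choose (k - j)).choose T : ℤ)
      = ∑ C ∈ (univ : Finset (Fin n)).powerset, (-1 : ℤ) ^ C.card *
          ((𝒰.filter (fun F => ∀ A ∈ F, C ⊆ A)).card : ℤ) := by
    rw [powerset_card_biUnion, sum_biUnion ((pairwise_disjoint_powersetCard _).set_pairwise _), card_univ, Fintype.card_fin]
    apply sum_congr rfl
    intro j _
    have hterm : ∀ C ∈ (univ : Finset (Fin n)).powersetCard j,
        (-1 : ℤ) ^ C.card * ((𝒰.filter (fun F => ∀ A ∈ F, C ⊆ A)).card : ℤ)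
          = (-1 : ℤ) ^ j * (((n - j).choose (k - j)).choose T : ℤ) := by
      intro C hC
      have hCj : C.card = j := (mem_powersetCard.mp hC).2
      by_cases hjk : j ≤ k
      · rw [G_card n k T C (by omega), hCj]
      · have hzero : 𝒰.filter (fun F => ∀ A ∈ F, C ⊆ A) = ∅ := by
          apply filter_false_of_mem
          intro F hF hall
          have hFc : F.card = T := (mem_powersetCard.mp hF).2
          have hFne : F.Nonempty := card_pos.mp (by omega)
          obtain ⟨A, hA⟩ := hFne
          have hAk : A.card = k := mem_powersetCard_univ.mp ((mem_powersetCard.mp hF).1 hA)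
          have := card_le_card (hall A hA)
          omega
        have hc0 : ((n - j).choose (k - j)).choose T = 0 := by
          have hkj : k - j = 0 := by omega
          rw [hkj, Nat.choose_zero_right, Nat.choose_eq_zero_of_lt (by omega : 1 < T)]
        rw [hzero, hCj, hc0]
        simp
    rw [sum_congr rfl hterm, sum_const, card_powersetCard, card_univ, Fintype.card_fin,
      nsmul_eq_mul]
    ring
  rw [hL]
  have hstep : ∀ C ∈ (univ : Finset (Fin n)).powerset,
      (-1 : ℤ) ^ C.card * ((𝒰.filter (fun F => ∀ A ∈ F, C ⊆ A)).card : ℤ)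
        = ∑ D ∈ (univ : Finset (Fin n)).powerset,
            if C ⊆ D then (-1 : ℤ) ^ C.card *
              ((𝒰.filter (fun F => F.inf id = D)).card : ℤ) else 0 := by
    intro C _
    rw [hGcount C]
    push_cast
    rw [mul_sum]
    apply sum_congr rfl
    intro D _
    split <;> simp
  rw [sum_congr rfl hstep, sum_comm]
  have hinner : ∀ D ∈ (univ : Finset (Fin n)).powerset,
      (∑ C ∈ (univ : Finset (Fin n)).powerset,
        if C ⊆ D then (-1 : ℤ) ^ C.card *
          ((𝒰.filter (fun F => F.inf id = D)).card : ℤ) else 0)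
        = if D = ∅ then ((𝒰.filter (fun F => F.inf id = D)).card : ℤ) else 0 := by
    intro D _
    rw [← sum_filter]
    have hps : ((univ : Finset (Fin n)).powerset).filter (fun C => C ⊆ D) = D.powerset := by
      ext C
      simp [mem_powerset, subset_univ]
    rw [hps, ← sum_mul, sum_powerset_neg_one_pow_card]
    split <;> simp
  rw [sum_congr rfl hinner, sum_ite_eq' ((univ : Finset (Fin n)).powerset) ∅]
  simp

private lemma inner_nonneg (n k T : ℕ) (hT : 2 ≤ T) (hkn : k ≤ n) :
    (0 : ℤ) ≤ ∑ j ∈ range k, (-1 : ℤ) ^ j * (n.choose j : ℤ) *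
        (((n - j).choose (k - j)).choose T : ℤ) := by
  have hext : ∑ j ∈ range k, (-1 : ℤ) ^ j * (n.choose j : ℤ) *
        (((n - j).choose (k - j)).choose T : ℤ)
      = ∑ j ∈ range (n + 1), (-1 : ℤ) ^ j * (n.choose j : ℤ) *
        (((n - j).choose (k - j)).choose T : ℤ) := by
    apply sum_subset (range_subset_range.mpr (by omega))
    intro j hj hnj
    rw [mem_range] at hj hnj
    have hkj : k - j = 0 := by omega
    rw [hkj, Nat.choose_zero_right, Nat.choose_eq_zero_of_lt (by omega : 1 < T)]
    simp
  rw [hext, alt_sum_eq n k T hT]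
  exact Int.natCast_nonneg _

/-- Nonnegativity of the achievable rate expression and of each inner
inclusion–exclusion sum (Theorem 2 sanity). -/
theorem stmt_16 (Λ r t_a t_p : ℕ) (hΛ : 0 < Λ) (hr : 0 < r) (hta : 0 < t_a)
    (htp : 0 < t_p) (hsum : t_a + r ≤ Λ)
    (hcond : Λ * t_p < (t_a + r) * t_p + r) :
    (∀ i, 1 ≤ i → i ≤ r - 1 →
      (0 : ℤ) ≤ ∑ j ∈ Finset.range (r - i), (-1 : ℤ) ^ j * ((Λ - t_a - i).choose j : ℤ) *
        ((((Λ - t_a - i - j).choose (r - i - j)).choose (t_p + 1)) : ℤ)) ∧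
    (0 : ℚ) ≤ ∑ i ∈ Finset.Icc 1 (r - 1),
      (((Λ - t_a).choose i : ℚ) *
        (((∑ j ∈ Finset.range (r - i), (-1 : ℤ) ^ j * ((Λ - t_a - i).choose j : ℤ) *
          ((((Λ - t_a - i - j).choose (r - i - j)).choose (t_p + 1)) : ℤ)) : ℤ) : ℚ)) /
        ((((Λ - t_a).choose r).choose t_p : ℚ) * ((t_a + i).choose t_a : ℚ)) := by
  have h1 : ∀ i, 1 ≤ i → i ≤ r - 1 →
      (0 : ℤ) ≤ ∑ j ∈ Finset.range (r - i), (-1 : ℤ) ^ j * ((Λ - t_a - i).choose j : ℤ) *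
        ((((Λ - t_a - i - j).choose (r - i - j)).choose (t_p + 1)) : ℤ) := by
    intro i hi1 hi2
    exact inner_nonneg (Λ - t_a - i) (r - i) (t_p + 1) (by omega) (by omega)
  refine ⟨h1, ?_⟩
  apply Finset.sum_nonneg
  intro i hi
  rw [Finset.mem_Icc] at hi
  apply div_nonneg
  · apply mul_nonneg (by positivity)
    exact_mod_cast h1 i hi.1 hi.2
  · positivity
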